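/- arXiv:1911.07949 — 3 statements merged into one kernel-verified Lean document; each statement's English description precedes it below -/
import Mathlib

section
/- If every parameter q_{ij} is a root of unity, then the quantum polynomial ring ℂ⟨x_0,…,x_n⟩/(x_i x_j − q_{ij} x_j x_i) is a finitely generated module over its center. -/
noncomputable section

/-- The defining relations `x_i x_j = q_{ij} x_j x_i` of the quantum polynomial ring
on `n+1` variables with parameters `Q i j`. -/
inductive QPRel {n : ℕ} (Q : Fin (n + 1) → Fin (n + 1) → ℂ) :
    FreeAlgebra ℂ (Fin (n + 1)) → FreeAlgebra ℂ (Fin (n + 1)) → Prop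
  | rel (i j : Fin (n + 1)) :
      QPRel Q (FreeAlgebra.ι ℂ i * FreeAlgebra.ι ℂ j)
        (Q i j • (FreeAlgebra.ι ℂ j * FreeAlgebra.ι ℂ i))

/-- The quantum polynomial ring `ℂ⟨x_0,…,x_n⟩/(x_i x_j − q_{ij} x_j x_i)`. -/
abbrev QuantumPolyRing {n : ℕ} (Q : Fin (n + 1) → Fin (n + 1) → ℂ) : Type :=
  RingQuot (QPRel Q)

namespace QPAux

variable {n : ℕ} (Q : Fin (n + 1) → Fin (n + 1) → ℂ)

/-- the generators -/
def X (i : Fin (n + 1)) : QuantumPolyRing Q :=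
  RingQuot.mkAlgHom ℂ (QPRel Q) (FreeAlgebra.ι ℂ i)

lemma comm (i j : Fin (n + 1)) : X Q i * X Q j = Q i j • (X Q j * X Q i) := by
  have := RingQuot.mkAlgHom_rel ℂ (QPRel.rel (Q := Q) i j)
  simpa [X, map_mul] using this

lemma pow_comm (j i : Fin (n + 1)) (m : ℕ) :
    X Q j * X Q i ^ m = Q j i ^ m • (X Q i ^ m * X Q j) := by
  induction m with
  | zero => simp
  | succ m ih =>
    rw [pow_succ', ← mul_assoc, comm Q j i, smul_mul_assoc, mul_assoc, ih,
      mul_smul_comm, smul_smul, ← mul_assoc, ← pow_succ', ← pow_succ']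

lemma mul_list (a : Fin (n + 1) → ℕ) (j : Fin (n + 1)) : ∀ l : List (Fin (n + 1)),
    X Q j * (l.map fun i => X Q i ^ a i).prod =
      ((l.map fun i => Q j i ^ a i).prod) • ((l.map fun i => X Q i ^ a i).prod * X Q j) := by
  intro l
  induction l with
  | nil => simp
  | cons i l ih =>
    simp only [List.map_cons, List.prod_cons]
    rw [← mul_assoc, pow_comm, smul_mul_assoc, mul_assoc, ih, mul_smul_comm,
      smul_smul, ← mul_assoc]

lemma adjoin_eq_top : Algebra.adjoin ℂ (Set.range (X Q)) = ⊤ := by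
  rw [eq_top_iff]
  rintro z -
  obtain ⟨w, rfl⟩ := RingQuot.mkAlgHom_surjective ℂ (QPRel Q) z
  refine FreeAlgebra.induction ℂ (Fin (n+1)) (motive := fun w =>
      RingQuot.mkAlgHom ℂ (QPRel Q) w ∈ Algebra.adjoin ℂ (Set.range (X Q)))
    (fun r => ?_) (fun i => ?_) (fun a b ha hb => ?_) (fun a b ha hb => ?_) w
  · rw [AlgHom.commutes]; exact Subalgebra.algebraMap_mem _ r
  · exact Algebra.subset_adjoin ⟨i, rfl⟩
  · rw [map_mul]; exact mul_mem ha hb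
  · rw [map_add]; exact add_mem ha hb

lemma central {N : ℕ} (hN : ∀ i j, Q i j ^ N = 1) (j : Fin (n + 1)) :
    X Q j ^ N ∈ Subalgebra.center ℂ (QuantumPolyRing Q) := by
  rw [Subalgebra.mem_center_iff]
  intro b
  have hb : b ∈ Algebra.adjoin ℂ (Set.range (X Q)) := by rw [adjoin_eq_top]; trivial
  induction hb using Algebra.adjoin_induction with
  | mem x hx =>
    obtain ⟨i, rfl⟩ := hx
    rw [pow_comm, hN, one_smul]
  | algebraMap r => rw [Algebra.commutes]
  | add x y _ _ hx hy => rw [add_mul, mul_add, hx, hy]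
  | mul x y _ _ hx hy => rw [mul_assoc, hy, ← mul_assoc, hx, mul_assoc]

/-- ordered monomial -/
def mono (a : Fin (n + 1) → ℕ) : QuantumPolyRing Q :=
  ((List.finRange (n + 1)).map fun i => X Q i ^ a i).prod

lemma finRange_split (j : Fin (n + 1)) :
    List.finRange (n + 1) =
      (List.finRange (n + 1)).take j.val ++ j :: (List.finRange (n + 1)).drop (j.val + 1) := by
  conv_lhs => rw [← List.take_append_drop j.val (List.finRange (n + 1))]
  rw [List.drop_eq_getElem_cons (by simp [j.isLt])]
  simp

lemma mem_take_ne {j x : Fin (n + 1)} (hx : x ∈ (List.finRange (n + 1)).take j.val) : x ≠ j := by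
  obtain ⟨k, hk, rfl⟩ := List.mem_iff_getElem.1 hx
  have hkj : k < j.val := lt_of_lt_of_le hk (by simp [List.length_take])
  simp only [List.getElem_take, List.getElem_finRange]
  exact Fin.ne_of_lt (by simpa [Fin.lt_def] using hkj)

lemma mem_drop_ne {j x : Fin (n + 1)} (hx : x ∈ (List.finRange (n + 1)).drop (j.val + 1)) :
    x ≠ j := by
  obtain ⟨k, hk, rfl⟩ := List.mem_iff_getElem.1 hx
  simp only [List.getElem_drop, List.getElem_finRange]
  exact Fin.ne_of_gt (by simp [Fin.lt_def]; omega)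

lemma mono_split (a : Fin (n + 1) → ℕ) (j : Fin (n + 1)) :
    mono Q a = (((List.finRange (n + 1)).take j.val).map fun i => X Q i ^ a i).prod *
      (X Q j ^ a j *
        (((List.finRange (n + 1)).drop (j.val + 1)).map fun i => X Q i ^ a i).prod) := by
  conv_lhs => rw [mono, finRange_split j]
  rw [List.map_append, List.prod_append, List.map_cons, List.prod_cons]

lemma map_update_take (a : Fin (n + 1) → ℕ) (j : Fin (n + 1)) (m : ℕ) :
    (((List.finRange (n + 1)).take j.val).map fun i => X Q i ^ (Function.update a j m) i) =
      ((List.finRange (n + 1)).take j.val).map fun i => X Q i ^ a i :=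
  List.map_congr_left fun x hx => by rw [Function.update_of_ne (mem_take_ne hx)]

lemma map_update_drop (a : Fin (n + 1) → ℕ) (j : Fin (n + 1)) (m : ℕ) :
    (((List.finRange (n + 1)).drop (j.val + 1)).map fun i => X Q i ^ (Function.update a j m) i) =
      ((List.finRange (n + 1)).drop (j.val + 1)).map fun i => X Q i ^ a i :=
  List.map_congr_left fun x hx => by rw [Function.update_of_ne (mem_drop_ne hx)]

lemma absorb (a : Fin (n + 1) → ℕ) (j : Fin (n + 1)) :
    X Q j * mono Q a =
      ((((List.finRange (n + 1)).take j.val).map fun i => Q j i ^ a i).prod) •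
        mono Q (Function.update a j (a j + 1)) := by
  rw [mono_split Q a j, ← mul_assoc, mul_list Q a j, smul_mul_assoc, mul_assoc,
    ← mul_assoc (X Q j), ← pow_succ']
  rw [mono_split Q (Function.update a j (a j + 1)) j, map_update_take, map_update_drop,
    Function.update_self]

lemma extract (a : Fin (n + 1) → ℕ) (j : Fin (n + 1)) {N : ℕ} (hN : ∀ i j, Q i j ^ N = 1)
    (haj : N ≤ a j) :
    mono Q a = X Q j ^ N * mono Q (Function.update a j (a j - N)) := by
  have hc : ∀ b : QuantumPolyRing Q, b * X Q j ^ N = X Q j ^ N * b :=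
    Subalgebra.mem_center_iff.mp (central Q hN j)
  rw [mono_split Q a j, mono_split Q (Function.update a j (a j - N)) j, map_update_take,
    map_update_drop, Function.update_self]
  have : X Q j ^ a j = X Q j ^ N * X Q j ^ (a j - N) := by
    rw [← pow_add, Nat.add_sub_cancel' haj]
  rw [this]
  rw [← mul_assoc, ← mul_assoc, hc, mul_assoc, mul_assoc]


variable (N : ℕ)

def g (b : Fin (n + 1) → Fin N) : QuantumPolyRing Q := mono Q fun i => (b i : ℕ)

def MM : Submodule (Subalgebra.center ℂ (QuantumPolyRing Q)) (QuantumPolyRing Q) :=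
  Submodule.span _ (Set.range (g Q N))

lemma center_smul_def (c : Subalgebra.center ℂ (QuantumPolyRing Q)) (y : QuantumPolyRing Q) :
    c • y = (c : QuantumPolyRing Q) * y := by
  rw [Subalgebra.smul_def, smul_eq_mul]

lemma center_mul_smul (c : Subalgebra.center ℂ (QuantumPolyRing Q)) (x y : QuantumPolyRing Q) :
    x * (c • y) = c • (x * y) := by
  rw [center_smul_def, center_smul_def, ← mul_assoc,
    Subalgebra.mem_center_iff.mp c.2 x, mul_assoc]

lemma complex_smul_mem {m : QuantumPolyRing Q} (hm : m ∈ MM Q N) (c : ℂ) :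
    c • m ∈ MM Q N := by
  have : c • m = (algebraMap ℂ (Subalgebra.center ℂ (QuantumPolyRing Q)) c) • m := by
    rw [center_smul_def, Subalgebra.coe_algebraMap, Algebra.smul_def]
  rw [this]
  exact Submodule.smul_mem _ _ hm

lemma mono_mem (hpos : 0 < N) (hN : ∀ i j, Q i j ^ N = 1) (a : Fin (n + 1) → ℕ) :
    mono Q a ∈ MM Q N := by
  generalize hs : (∑ i, a i) = s
  induction s using Nat.strong_induction_on generalizing a with
  | _ s ih =>
  by_cases h : ∀ i, a i < N
  · exact Submodule.subset_span ⟨fun i => ⟨a i, h i⟩, by simp [g]⟩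
  · push_neg at h
    obtain ⟨j, hj⟩ := h
    rw [extract Q a j hN hj]
    have heq : (⟨X Q j ^ N, central Q hN j⟩ : Subalgebra.center ℂ (QuantumPolyRing Q)) •
        mono Q (Function.update a j (a j - N)) =
        X Q j ^ N * mono Q (Function.update a j (a j - N)) := center_smul_def Q _ _
    rw [← heq]
    refine Submodule.smul_mem _ _ (ih _ ?_ _ rfl)
    subst hs
    rw [Finset.sum_update_of_mem (Finset.mem_univ j)]
    have h2 : a j + ∑ i ∈ Finset.univ.erase j, a i = ∑ i, a i :=
      Finset.add_sum_erase Finset.univ a (Finset.mem_univ j)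
    rw [← Finset.erase_eq] at *
    omega

lemma mul_mem_MM (hpos : 0 < N) (hN : ∀ i j, Q i j ^ N = 1) (z : QuantumPolyRing Q) :
    ∀ m ∈ MM Q N, z * m ∈ MM Q N := by
  have hz : z ∈ Algebra.adjoin ℂ (Set.range (X Q)) := by rw [adjoin_eq_top]; trivial
  induction hz using Algebra.adjoin_induction with
  | mem x hx =>
    obtain ⟨i, rfl⟩ := hx
    intro m hm
    induction hm using Submodule.span_induction with
    | mem m hmem =>
      obtain ⟨b, rfl⟩ := hmem
      rw [g, absorb]
      exact complex_smul_mem Q N (mono_mem Q N hpos hN _) _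
    | zero => rw [mul_zero]; exact Submodule.zero_mem _
    | add x y hx hy ihx ihy => rw [mul_add]; exact Submodule.add_mem _ ihx ihy
    | smul c x hx ihx => rw [center_mul_smul]; exact Submodule.smul_mem _ _ ihx
  | algebraMap r =>
    intro m hm
    have : algebraMap ℂ (QuantumPolyRing Q) r * m = r • m := (Algebra.smul_def r m).symm
    rw [this]
    exact complex_smul_mem Q N hm r
  | add x y hx hy ihx ihy =>
    intro m hm
    rw [add_mul]
    exact Submodule.add_mem _ (ihx m hm) (ihy m hm)
  | mul x y hx hy ihx ihy =>
    intro m hm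
    rw [mul_assoc]
    exact ihx _ (ihy m hm)

lemma MM_eq_top (hpos : 0 < N) (hN : ∀ i j, Q i j ^ N = 1) : MM Q N = ⊤ := by
  rw [eq_top_iff]
  intro z _
  have h1 : (1 : QuantumPolyRing Q) = mono Q (fun _ => 0) := by
    simp [mono, List.prod_eq_one]
  have := mul_mem_MM Q N hpos hN z (mono Q fun _ => 0) (mono_mem Q N hpos hN _)
  rwa [← h1, mul_one] at this

end QPAux

theorem quantumPolyRing_finite_over_center (n : ℕ)
    (Q : Fin (n + 1) → Fin (n + 1) → ℂ)
    (hdiag : ∀ i, Q i i = 1) (hinv : ∀ i j, Q i j * Q j i = 1)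
    (hroot : ∀ i j, ∃ k : ℕ, 0 < k ∧ Q i j ^ k = 1) :
    Module.Finite (Subalgebra.center ℂ (QuantumPolyRing Q)) (QuantumPolyRing Q) := by
  classical
  set N : ℕ := ∏ p : Fin (n + 1) × Fin (n + 1), (hroot p.1 p.2).choose with hNdef
  have hN : ∀ i j, Q i j ^ N = 1 := by
    intro i j
    obtain ⟨m, hm⟩ := Finset.dvd_prod_of_mem
      (f := fun p : Fin (n + 1) × Fin (n + 1) => (hroot p.1 p.2).choose) (Finset.mem_univ (i, j))
    rw [hNdef, hm, pow_mul, (hroot i j).choose_spec.2, one_pow]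
  have hpos : 0 < N := Finset.prod_pos fun p _ => (hroot p.1 p.2).choose_spec.1
  refine ⟨⟨(Set.finite_range (QPAux.g Q N)).toFinset, ?_⟩⟩
  rw [Set.Finite.coe_toFinset]
  exact QPAux.MM_eq_top Q N hpos hN
end
end

section
/- Each of the following three operations on matrices in Matrix (Fin 5) (Fin 5) (ZMod 5) preserves both the property of being a quantum Fermat parameter matrix and the property of being generic: (1) scaling N ↦ u • N by a unit u ∈ (ZMod 5)ˣ; (2) simultaneous permutation N ↦ ((i,j) ↦ N (σ i) (σ j)) by a permutation σ of Fin 5; (3) the twist N ↦ ((i,j) ↦ N i j + a i − a j) by any function a : Fin 5 → ZMod 5. -/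
open scoped BigOperators

/-- `N` is a quantum Fermat parameter matrix: zero diagonal, skew-symmetric, and the
row sums are independent of the row (i.e. `(1,1,1,1,1)` is an eigenvector of `N`). -/
def IsQFParam (N : Matrix (Fin 5) (Fin 5) (ZMod 5)) : Prop :=
  (∀ i, N i i = 0) ∧ (∀ i j, N j i = - N i j) ∧
    (∀ i i', ∑ j, N i j = ∑ j, N i' j)

/-- `N` is generic: `N i j + N j k ≠ N i k` for all pairwise distinct `i, j, k`. -/
def IsGeneric (N : Matrix (Fin 5) (Fin 5) (ZMod 5)) : Prop :=
  ∀ i j k : Fin 5, i ≠ j → j ≠ k → i ≠ k → N i j + N j k ≠ N i k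

theorem actions_preserve_QFParam_and_generic :
    (∀ (u : (ZMod 5)ˣ) (N : Matrix (Fin 5) (Fin 5) (ZMod 5)),
      (IsQFParam N → IsQFParam (Matrix.of fun i j => (u : ZMod 5) * N i j)) ∧
      (IsGeneric N → IsGeneric (Matrix.of fun i j => (u : ZMod 5) * N i j))) ∧
    (∀ (σ : Equiv.Perm (Fin 5)) (N : Matrix (Fin 5) (Fin 5) (ZMod 5)),
      (IsQFParam N → IsQFParam (Matrix.of fun i j => N (σ i) (σ j))) ∧
      (IsGeneric N → IsGeneric (Matrix.of fun i j => N (σ i) (σ j)))) ∧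
    (∀ (a : Fin 5 → ZMod 5) (N : Matrix (Fin 5) (Fin 5) (ZMod 5)),
      (IsQFParam N → IsQFParam (Matrix.of fun i j => N i j + a i - a j)) ∧
      (IsGeneric N → IsGeneric (Matrix.of fun i j => N i j + a i - a j))) := by
  refine ⟨fun u N => ⟨fun ⟨h0, hs, hr⟩ => ?_, fun hg i j k hij hjk hik h => ?_⟩,
    fun σ N => ⟨fun ⟨h0, hs, hr⟩ => ?_, fun hg i j k hij hjk hik h => ?_⟩,
    fun a N => ⟨fun ⟨h0, hs, hr⟩ => ?_, fun hg i j k hij hjk hik h => ?_⟩⟩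
  · refine ⟨fun i => by simp [h0 i], fun i j => by simp [hs i j, mul_neg], fun i i' => ?_⟩
    simp only [Matrix.of_apply, ← Finset.mul_sum, hr i i']
  · exact hg i j k hij hjk hik (by
      have := h
      simp only [Matrix.of_apply, ← mul_add] at this
      exact (Units.mul_right_inj u).mp this)
  · refine ⟨fun i => h0 _, fun i j => hs _ _, fun i i' => ?_⟩
    simp only [Matrix.of_apply]
    rw [Equiv.sum_comp σ (fun j => N (σ i) j), Equiv.sum_comp σ (fun j => N (σ i') j)]
    exact hr _ _
  · exact hg (σ i) (σ j) (σ k) (fun e => hij (σ.injective e)) (fun e => hjk (σ.injective e))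
      (fun e => hik (σ.injective e)) h
  · refine ⟨fun i => by simp [h0 i], fun i j => by simp [hs i j]; ring, fun i i' => ?_⟩
    simp only [Matrix.of_apply, sub_eq_add_neg]
    rw [Finset.sum_add_distrib, Finset.sum_add_distrib, Finset.sum_add_distrib,
      Finset.sum_add_distrib, hr i i', Finset.sum_const, Finset.sum_const]
    have : (5 : ZMod 5) = 0 := by decide
    simp [nsmul_eq_mul, this]
  · apply hg i j k hij hjk hik
    simp only [Matrix.of_apply] at h
    linear_combination h
end

section
/- Assume that ∏_{j=0}^{4} q_{ij} = 1 for every i (equivalently, ∑_j N i j = 0 in ZMod 5 for every i). Then for every tuple a = (a_0,…,a_4) ∈ {0,1,2,3,4}^5 whose sum a_0 + ⋯ + a_4 is divisible by 5, one has the equality of complex numbers ∏_{i>j} q_{ij}^{a_i (4 − a_j)} = ∏_{i>j} q_{ij}^{(4 − a_i) a_j}. (This is the symmetry of the Frobenius pairing on the quantum Fermat quintic algebra: the pairing q_{a, 4−a} = q_{4−a, a} for all a in the index set I, where q_{a,b} = ∏_{i>j} q_{ij}^{a_i b_j}.) -/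
open scoped BigOperators

set_option maxRecDepth 100000
noncomputable section

/-- The quantum parameter `q_{ij} = q^{(N i j).val}`. -/
def qparam (q : ℂ) (N : Fin 5 → Fin 5 → ZMod 5) (i j : Fin 5) : ℂ :=
  q ^ (N i j).val

theorem frobenius_pairing_symmetric (q : ℂ) (hq : IsPrimitiveRoot q 5)
    (N : Fin 5 → Fin 5 → ZMod 5) (hdiag : ∀ i, N i i = 0)
    (hskew : ∀ i j, N j i = - N i j)
    (hsum : ∀ i : Fin 5, ∑ j : Fin 5, N i j = 0)
    (a : Fin 5 → Fin 5) (ha : 5 ∣ ∑ i : Fin 5, (a i).val) :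
    ∏ i : Fin 5, ∏ j ∈ Finset.univ.filter (fun j : Fin 5 => j < i),
        qparam q N i j ^ ((a i).val * (4 - (a j).val)) =
      ∏ i : Fin 5, ∏ j ∈ Finset.univ.filter (fun j : Fin 5 => j < i),
        qparam q N i j ^ ((4 - (a i).val) * (a j).val) := by
  have key : ∀ (f : Fin 5 → Fin 5 → ℕ),
      ∏ i : Fin 5, ∏ j ∈ Finset.univ.filter (fun j : Fin 5 => j < i),
        qparam q N i j ^ f i j
      = q ^ ∑ i : Fin 5, ∑ j ∈ Finset.univ.filter (fun j : Fin 5 => j < i),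
          (N i j).val * f i j := by
    intro f
    simp only [qparam, ← pow_mul, Finset.prod_pow_eq_pow_sum]
  have hq5 : q ^ 5 = 1 := hq.pow_eq_one
  have hpow : ∀ m n : ℕ, ((m : ZMod 5) = n) → q ^ m = q ^ n := by
    intro m n h
    rw [← Nat.div_add_mod m 5, ← Nat.div_add_mod n 5, pow_add, pow_add,
      pow_mul, pow_mul, hq5, one_pow, one_pow]
    have h' : m % 5 = n % 5 := (ZMod.natCast_eq_natCast_iff m n 5).mp h
    rw [h']
  rw [key, key]
  apply hpow
  push_cast
  have hNv : ∀ i j : Fin 5, (((N i j).val : ℕ) : ZMod 5) = N i j := fun i j => by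
    rw [ZMod.natCast_val, ZMod.cast_id]
  have hsub : ∀ k : Fin 5, ((4 - (a k).val : ℕ) : ZMod 5) = 4 - ((a k).val : ZMod 5) := by
    intro k
    rw [Nat.cast_sub (Nat.lt_succ_iff.mp (a k).isLt)]
    norm_num
  simp only [hNv, hsub, Finset.sum_filter, Fin.sum_univ_five]
  simp only [show ((0:Fin 5) < 0) = False from by decide, show ((1:Fin 5) < 0) = False from by decide, show ((2:Fin 5) < 0) = False from by decide, show ((3:Fin 5) < 0) = False from by decide, show ((4:Fin 5) < 0) = False from by decide, show ((0:Fin 5) < 1) = True from by decide, show ((1:Fin 5) < 1) = False from by decide, show ((2:Fin 5) < 1) = False from by decide, show ((3:Fin 5) < 1) = False from by decide, show ((4:Fin 5) < 1) = False from by decide, show ((0:Fin 5) < 2) = True from by decide, show ((1:Fin 5) < 2) = True from by decide, show ((2:Fin 5) < 2) = False from by decide, show ((3:Fin 5) < 2) = False from by decide, show ((4:Fin 5) < 2) = False from by decide, show ((0:Fin 5) < 3) = True from by decide, show ((1:Fin 5) < 3) = True from by decide, show ((2:Fin 5) < 3) = True from by decide, show ((3:Fin 5) < 3) = False from by decide,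 show ((4:Fin 5) < 3) = False from by decide, show ((0:Fin 5) < 4) = True from by decide, show ((1:Fin 5) < 4) = True from by decide, show ((2:Fin 5) < 4) = True from by decide, show ((3:Fin 5) < 4) = True from by decide, show ((4:Fin 5) < 4) = False from by decide, if_true, if_false, add_zero, zero_add]
  have h0 := hsum 0; have h1 := hsum 1; have h2 := hsum 2
  have h3 := hsum 3; have h4 := hsum 4
  simp only [Fin.sum_univ_five] at h0 h1 h2 h3 h4
  linear_combination
      (4 * ((a 0).val : ZMod 5)) * h0 + (4 * ((a 1).val : ZMod 5)) * h1 +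
      (4 * ((a 2).val : ZMod 5)) * h2 + (4 * ((a 3).val : ZMod 5)) * h3 +
      (4 * ((a 4).val : ZMod 5)) * h4
    - (4 * ((a 0).val : ZMod 5)) * hdiag 0 - (4 * ((a 1).val : ZMod 5)) * hdiag 1
    - (4 * ((a 2).val : ZMod 5)) * hdiag 2 - (4 * ((a 3).val : ZMod 5)) * hdiag 3
    - (4 * ((a 4).val : ZMod 5)) * hdiag 4
    - (4 * ((a 0).val : ZMod 5)) * hskew 0 1 - (4 * ((a 0).val : ZMod 5)) * hskew 0 2
    - (4 * ((a 0).val : ZMod 5)) * hskew 0 3 - (4 * ((a 0).val : ZMod 5)) * hskew 0 4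
    - (4 * ((a 1).val : ZMod 5)) * hskew 1 2 - (4 * ((a 1).val : ZMod 5)) * hskew 1 3
    - (4 * ((a 1).val : ZMod 5)) * hskew 1 4 - (4 * ((a 2).val : ZMod 5)) * hskew 2 3
    - (4 * ((a 2).val : ZMod 5)) * hskew 2 4 - (4 * ((a 3).val : ZMod 5)) * hskew 3 4
end
end
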